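/- Let (Ω, F, P) be a probability space, E = L⁰(F, ℝ^d), and G a σ-stable subset. Fix measurable ε with ε(ω) > 0 a.e. Suppose for the plain real number ε₀ > 0 there exist a countable measurable partition (A_n) of Ω and finite subsets G_n ⊂ G such that for every x ∈ G and every n, essinf{ |1_{A_n}(x − y)| : y ∈ σ(G_n)} < ε₀ a.e. on A_n, where σ(G_n) is the set of countable measurable pastings of elements of G_n. Then G is a.s. bounded: there is measurable ξ ≥ 0 with |x(ω)| ≤ ξ(ω) a.e. for all x ∈ G. -/

import Mathlib

open MeasureTheory Filter

/-- A countable measurable partition of `Ω`. -/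
def IsCountablePartition {Ω : Type*} [MeasurableSpace Ω] (A : ℕ → Set Ω) : Prop :=
  (∀ n, MeasurableSet (A n)) ∧ Pairwise (Function.onFun Disjoint A) ∧ (⋃ n, A n) = Set.univ

/-- The σ-stable hull of a set of random points: all countable measurable pastings. -/
def sigmaHull {Ω : Type*} [MeasurableSpace Ω] {E : Type*}
    (S : Set (Ω → E)) : Set (Ω → E) :=
  {g | ∃ (y : ℕ → Ω → E) (A : ℕ → Set Ω),
    (∀ k, y k ∈ S) ∧ IsCountablePartition A ∧ ∀ k, ∀ ω ∈ A k, g ω = y k ω}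

private lemma measurable_finset_inf' {Ω ι : Type*} [MeasurableSpace Ω] {s : Finset ι}
    (hs : s.Nonempty) {f : ι → Ω → ℝ} (hf : ∀ i ∈ s, Measurable (f i)) :
    Measurable fun ω => s.inf' hs fun i => f i ω := by
  induction s using Finset.cons_induction with
  | empty => exact absurd hs (by simp)
  | cons i s hi ih =>
    rcases s.eq_empty_or_nonempty with rfl | hs'
    · simpa using hf i (by simp)
    · simp only [Finset.inf'_cons (H := hs')]
      exact (hf i (by simp)).inf (ih hs' fun j hj => hf j (Finset.mem_cons_of_mem hj))

private lemma measurable_finset_sup' {Ω ι : Type*} [MeasurableSpace Ω] {s : Finset ι}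
    (hs : s.Nonempty) {f : ι → Ω → ℝ} (hf : ∀ i ∈ s, Measurable (f i)) :
    Measurable fun ω => s.sup' hs fun i => f i ω := by
  induction s using Finset.cons_induction with
  | empty => exact absurd hs (by simp)
  | cons i s hi ih =>
    rcases s.eq_empty_or_nonempty with rfl | hs'
    · simpa using hf i (by simp)
    · simp only [Finset.sup'_cons (H := hs')]
      exact (hf i (by simp)).sup (ih hs' fun j hj => hf j (Finset.mem_cons_of_mem hj))

private lemma const_mem_sigmaHull {Ω : Type*} [MeasurableSpace Ω] {E : Type*}
    {S : Set (Ω → E)} {z : Ω → E} (hz : z ∈ S) : z ∈ sigmaHull S := by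
  refine ⟨fun _ => z, fun k => if k = 0 then Set.univ else ∅, fun _ => hz, ⟨?_, ?_, ?_⟩,
    fun k ω _ => rfl⟩
  · intro n; by_cases h : n = 0 <;> simp [h]
  · intro i j hij
    simp only [Function.onFun]
    rcases eq_or_ne i 0 with rfl | hi
    · simp [hij.symm]
    · simp [hi]
  · refine Set.eq_univ_iff_forall.2 fun ω => Set.mem_iUnion.2 ⟨0, by simp⟩

/-- Lemma 2.7(6): a random totally bounded set is a.s. bounded. -/
theorem random_totally_bounded_implies_as_bounded
    {Ω : Type*} [MeasurableSpace Ω] (P : Measure Ω) [IsProbabilityMeasure P]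
    (d : ℕ) (G : Set (Ω → EuclideanSpace ℝ (Fin d)))
    (hne : G.Nonempty) (hGmeas : ∀ x ∈ G, Measurable x)
    (hstable : ∀ (y : ℕ → Ω → EuclideanSpace ℝ (Fin d)), (∀ n, y n ∈ G) →
      ∀ (A : ℕ → Set Ω), IsCountablePartition A →
      ∀ g : Ω → EuclideanSpace ℝ (Fin d), (∀ n, ∀ ω ∈ A n, g ω = y n ω) → g ∈ G)
    (ε₀ : ℝ) (hε₀ : 0 < ε₀)
    (A : ℕ → Set Ω) (hA : IsCountablePartition A)
    (Gfin : ℕ → Set (Ω → EuclideanSpace ℝ (Fin d)))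
    (hGfin : ∀ n, (Gfin n).Finite ∧ (Gfin n).Nonempty ∧ Gfin n ⊆ G)
    -- random total boundedness: any essential infimum of the random distances from
    -- `1_{A n}·x` to `1_{A n}·σ(Gfin n)` is `< ε₀` a.e. on `A n`
    (htb : ∀ x ∈ G, ∀ n, ∀ δ : Ω → ℝ, Measurable δ →
      (∀ y ∈ sigmaHull (Gfin n), ∀ᵐ ω ∂P,
        δ ω ≤ ‖(A n).indicator (fun ω' => x ω' - y ω') ω‖) →
      (∀ δ' : Ω → ℝ, Measurable δ' →
        (∀ y ∈ sigmaHull (Gfin n), ∀ᵐ ω ∂P,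
          δ' ω ≤ ‖(A n).indicator (fun ω' => x ω' - y ω') ω‖) →
        ∀ᵐ ω ∂P, δ' ω ≤ δ ω) →
      ∀ᵐ ω ∂P, ω ∈ A n → δ ω < ε₀) :
    ∃ ξ : Ω → ℝ, Measurable ξ ∧ (∀ ω, 0 ≤ ξ ω) ∧
      ∀ x ∈ G, ∀ᵐ ω ∂P, ‖x ω‖ ≤ ξ ω := by
  classical
  obtain ⟨hAmeas, hAdisj, hAunion⟩ := hA
  set T : ℕ → Finset (Ω → EuclideanSpace ℝ (Fin d)) := fun n => (hGfin n).1.toFinset with hT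
  have hTne : ∀ n, (T n).Nonempty := fun n =>
    (Set.Finite.toFinset_nonempty _).2 (hGfin n).2.1
  have hTmem : ∀ n, ∀ z, z ∈ T n ↔ z ∈ Gfin n := fun n z => (hGfin n).1.mem_toFinset
  have hTG : ∀ n, ∀ z ∈ T n, z ∈ G := fun n z hz => (hGfin n).2.2 ((hTmem n z).1 hz)
  have hω : ∀ ω : Ω, ∃ n, ω ∈ A n := fun ω => by
    have : ω ∈ ⋃ n, A n := hAunion ▸ Set.mem_univ ω
    exact Set.mem_iUnion.1 this
  set M : ℕ → Ω → ℝ := fun n ω => (T n).sup' (hTne n) fun z => ‖z ω‖ with hM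
  have hMmeas : ∀ n, Measurable (M n) := fun n =>
    measurable_finset_sup' (hTne n) fun z hz => (hGmeas z (hTG n z hz)).norm
  have hMnonneg : ∀ n ω, 0 ≤ M n ω := by
    intro n ω
    obtain ⟨z, hz⟩ := hTne n
    exact le_trans (norm_nonneg _) (Finset.le_sup' (f := fun z => ‖z ω‖) hz)
  refine ⟨fun ω => ε₀ + M (Nat.find (hω ω)) ω, ?_, ?_, ?_⟩
  · exact measurable_const.add
      (Measurable.find (p := fun n ω => ω ∈ A n) (fun n => hMmeas n) (fun n => hAmeas n) hω)
  · intro ω; exact add_nonneg hε₀.le (hMnonneg _ ω)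
  · intro x hx
    -- the candidate essential infimum on piece n
    set δ : ℕ → Ω → ℝ := fun n ω =>
      (T n).inf' (hTne n) fun z => ‖(A n).indicator (fun ω' => x ω' - z ω') ω‖ with hδ
    have hδmeas : ∀ n, Measurable (δ n) := fun n =>
      measurable_finset_inf' (hTne n) fun z hz =>
        (((hGmeas x hx).sub (hGmeas z (hTG n z hz))).indicator (hAmeas n)).norm
    have hlow : ∀ n, ∀ y ∈ sigmaHull (Gfin n), ∀ ω,
        δ n ω ≤ ‖(A n).indicator (fun ω' => x ω' - y ω') ω‖ := by
      intro n y hy ω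
      obtain ⟨ys, B, hys, ⟨hBm, hBd, hBu⟩, hyeq⟩ := hy
      obtain ⟨k, hk⟩ : ∃ k, ω ∈ B k := Set.mem_iUnion.1 (hBu ▸ Set.mem_univ ω)
      have hzT : ys k ∈ T n := (hTmem n _).2 (hys k)
      have := Finset.inf'_le (f := fun z => ‖(A n).indicator (fun ω' => x ω' - z ω') ω‖) hzT
      refine le_trans this (le_of_eq ?_)
      by_cases hωA : ω ∈ A n
      · rw [Set.indicator_of_mem hωA, Set.indicator_of_mem hωA, hyeq k ω hk]
      · rw [Set.indicator_of_notMem hωA, Set.indicator_of_notMem hωA]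
    have hmax : ∀ n, ∀ δ' : Ω → ℝ, Measurable δ' →
        (∀ y ∈ sigmaHull (Gfin n), ∀ᵐ ω ∂P,
          δ' ω ≤ ‖(A n).indicator (fun ω' => x ω' - y ω') ω‖) →
        ∀ᵐ ω ∂P, δ' ω ≤ δ n ω := by
      intro n δ' _ hδ'
      have : ∀ᵐ ω ∂P, ∀ z ∈ T n,
          δ' ω ≤ ‖(A n).indicator (fun ω' => x ω' - z ω') ω‖ :=
        (Filter.eventually_all_finset (T n)).2 fun z hz =>
          hδ' z (const_mem_sigmaHull ((hTmem n z).1 hz))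
      filter_upwards [this] with ω hω'
      exact Finset.le_inf' (hTne n) _ fun z hz => hω' z hz
    have hconc : ∀ᵐ ω ∂P, ∀ n, ω ∈ A n → δ n ω < ε₀ :=
      ae_all_iff.2 fun n => htb x hx n (δ n) (hδmeas n)
        (fun y hy => Filter.Eventually.of_forall (hlow n y hy)) (hmax n)
    filter_upwards [hconc] with ω hω'
    set n := Nat.find (hω ω) with hn
    have hωn : ω ∈ A n := Nat.find_spec (hω ω)
    have hlt := hω' n hωn
    obtain ⟨z, hz, hze⟩ := Finset.exists_mem_eq_inf' (hTne n)
      fun z => ‖(A n).indicator (fun ω' => x ω' - z ω') ω‖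
    have hδe : δ n ω = ‖(A n).indicator (fun ω' => x ω' - z ω') ω‖ := hze
    rw [hδe, Set.indicator_of_mem hωn] at hlt
    have h1 : ‖x ω‖ ≤ ‖x ω - z ω‖ + ‖z ω‖ := by
      calc ‖x ω‖ = ‖(x ω - z ω) + z ω‖ := by rw [sub_add_cancel]
      _ ≤ ‖x ω - z ω‖ + ‖z ω‖ := norm_add_le _ _
    calc ‖x ω‖ ≤ ‖x ω - z ω‖ + ‖z ω‖ := h1
      _ ≤ ε₀ + M n ω :=
        add_le_add hlt.le (Finset.le_sup' (f := fun z => ‖z ω‖) hz)
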